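/- Let σ be a map assigning to each pair x < y in P an element σ(x,y) ∈ R which is constant on chains. Then the map B : I(P,R) × I(P,R) → I(P,R) defined by B(f,g)(x,x) = 0 for all x ∈ P and B(f,g)(x,y) = σ(x,y)·[f,g](x,y) for all x < y is an R-bilinear antisymmetric biderivation of I(P,R). -/

import Mathlib

open Finset IncidenceAlgebra

lemma chain3_aux {P : Type*} [PartialOrder P] {x z y : P} (h1 : x ≤ z) (h2 : z ≤ y) :
    IsChain (· ≤ ·) ({x, z, y} : Set P) := by
  have h3 : x ≤ y := h1.trans h2
  intro a ha b hb _
  simp only [Set.mem_insert_iff, Set.mem_singleton_iff] at ha hb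
  rcases ha with rfl | rfl | rfl <;> rcases hb with rfl | rfl | rfl <;>
    first
      | exact Or.inl le_rfl
      | exact Or.inl (by assumption)
      | exact Or.inr (by assumption)

lemma comm_diag_aux {R P : Type*} [CommRing R] [PartialOrder P] [LocallyFiniteOrder P]
    [DecidableEq P] (f g : IncidenceAlgebra R P) (x : P) : (f * g - g * f) x x = 0 := by
  simp only [IncidenceAlgebra.sub_apply, mul_apply, Finset.Icc_self, Finset.sum_singleton]
  ring

/-- If `σ : P²_< → R` is constant on chains, then the map `B` defined by
`B(f,g)(x,x) = 0` and `B(f,g)(x,y) = σ(x,y)[f,g](x,y)` for `x < y` is an `R`-bilinear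
antisymmetric biderivation of `I(P,R)`. -/
theorem sigma_commutator_is_antisymm_bider
    {R P : Type*} [CommRing R] [PartialOrder P] [LocallyFiniteOrder P] [DecidableEq P]
    (σ : P → P → R)
    (hσ : ∀ x y u v : P, x < y → u < v → IsChain (· ≤ ·) ({x, y, u, v} : Set P) →
      σ x y = σ u v)
    (B : IncidenceAlgebra R P → IncidenceAlgebra R P → IncidenceAlgebra R P)
    (hB_diag : ∀ (f g : IncidenceAlgebra R P) (x : P), B f g x x = 0)
    (hB_lt : ∀ (f g : IncidenceAlgebra R P) (x y : P), x < y →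
      B f g x y = σ x y * (f * g - g * f) x y) :
    (∀ f g h, B (f + g) h = B f h + B g h) ∧
    (∀ f g h, B f (g + h) = B f g + B f h) ∧
    (∀ (r : R) (f g), B (r • f) g = r • B f g) ∧
    (∀ (r : R) (f g), B f (r • g) = r • B f g) ∧
    (∀ f g h, B (f * g) h = B f h * g + f * B g h) ∧
    (∀ f g h, B f (g * h) = B f g * h + g * B f h) ∧
    (∀ f, B f f = 0) := by
  -- universal formula
  have hB' : ∀ f g x y, B f g x y = σ x y * (f * g - g * f) x y := by
    intro f g x y
    by_cases hle : x ≤ y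
    · rcases hle.lt_or_eq with hlt | rfl
      · exact hB_lt f g x y hlt
      · rw [hB_diag, comm_diag_aux, mul_zero]
    · rw [apply_eq_zero_of_not_le hle, IncidenceAlgebra.sub_apply,
        apply_eq_zero_of_not_le hle, apply_eq_zero_of_not_le hle, sub_zero, mul_zero]
  have hσ1 : ∀ x z y : P, x < z → z ≤ y → σ x z = σ x y := by
    intro x z y h1 h2
    refine hσ x z x y h1 (h1.trans_le h2) ((chain3_aux h1.le h2).mono ?_)
    intro a; simp only [Set.mem_insert_iff, Set.mem_singleton_iff]; tauto
  have hσ2 : ∀ x z y : P, x ≤ z → z < y → σ z y = σ x y := by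
    intro x z y h1 h2
    refine hσ z y x y h2 (h1.trans_lt h2) ((chain3_aux h1 h2.le).mono ?_)
    intro a; simp only [Set.mem_insert_iff, Set.mem_singleton_iff]; tauto
  refine ⟨?_, ?_, ?_, ?_, ?_, ?_, ?_⟩
  · intro f g h
    ext x y _
    have key : (f + g) * h - h * (f + g) = (f * h - h * f) + (g * h - h * g) := by noncomm_ring
    rw [hB', key, IncidenceAlgebra.add_apply, IncidenceAlgebra.add_apply, hB', hB', mul_add]
  · intro f g h
    ext x y _
    have key : f * (g + h) - (g + h) * f = (f * g - g * f) + (f * h - h * f) := by noncomm_ring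
    rw [hB', key, IncidenceAlgebra.add_apply, IncidenceAlgebra.add_apply, hB', hB', mul_add]
  · intro r f g
    ext x y _
    have key : (r • f) * g - g * (r • f) = r • (f * g - g * f) := by
      rw [smul_sub, smul_mul_assoc, mul_smul_comm]
    rw [hB', key, constSMul_apply, constSMul_apply, hB', smul_eq_mul, smul_eq_mul]
    ring
  · intro r f g
    ext x y _
    have key : f * (r • g) - (r • g) * f = r • (f * g - g * f) := by
      rw [smul_sub, smul_mul_assoc, mul_smul_comm]
    rw [hB', key, constSMul_apply, constSMul_apply, hB', smul_eq_mul, smul_eq_mul]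
    ring
  · intro f g h
    ext x y hxy
    have key : (f * g) * h - h * (f * g) = (f * h - h * f) * g + f * (g * h - h * g) := by
      noncomm_ring
    rw [hB', key, IncidenceAlgebra.add_apply, mul_apply, mul_apply, IncidenceAlgebra.add_apply, mul_apply, mul_apply,
      mul_add, Finset.mul_sum, Finset.mul_sum]
    congr 1
    · refine Finset.sum_congr rfl fun z hz => ?_
      obtain ⟨h1, h2⟩ := Finset.mem_Icc.mp hz
      rw [hB' f h x z]
      rcases h1.lt_or_eq with hlt | rfl
      · rw [hσ1 x z y hlt h2]; ring
      · rw [comm_diag_aux]; ring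
    · refine Finset.sum_congr rfl fun z hz => ?_
      obtain ⟨h1, h2⟩ := Finset.mem_Icc.mp hz
      rw [hB' g h z y]
      rcases h2.lt_or_eq with hlt | rfl
      · rw [hσ2 x z y h1 hlt]; ring
      · rw [comm_diag_aux]; ring
  · intro f g h
    ext x y hxy
    have key : f * (g * h) - (g * h) * f = (f * g - g * f) * h + g * (f * h - h * f) := by
      noncomm_ring
    rw [hB', key, IncidenceAlgebra.add_apply, mul_apply, mul_apply, IncidenceAlgebra.add_apply, mul_apply, mul_apply,
      mul_add, Finset.mul_sum, Finset.mul_sum]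
    congr 1
    · refine Finset.sum_congr rfl fun z hz => ?_
      obtain ⟨h1, h2⟩ := Finset.mem_Icc.mp hz
      rw [hB' f g x z]
      rcases h1.lt_or_eq with hlt | rfl
      · rw [hσ1 x z y hlt h2]; ring
      · rw [comm_diag_aux]; ring
    · refine Finset.sum_congr rfl fun z hz => ?_
      obtain ⟨h1, h2⟩ := Finset.mem_Icc.mp hz
      rw [hB' f h z y]
      rcases h2.lt_or_eq with hlt | rfl
      · rw [hσ2 x z y h1 hlt]; ring
      · rw [comm_diag_aux]; ring
  · intro f
    ext x y _
    rw [hB', sub_self, IncidenceAlgebra.zero_apply, mul_zero]
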